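/- Let Z be a separable real Banach space and let φ : ℓ₁ → Z be a bounded linear surjection. If every bounded linear operator from ker φ into ℓ₂ is 1-summing, then every short exact sequence 0 → ℓ₂ → Y → Z → 0 of real Banach spaces splits. -/

import Mathlib

noncomputable section

/-- The real sequence space `ℓ₁(ℕ)`. -/
abbrev ellOne : Type := lp (fun _ : ℕ => ℝ) 1

/-- The real sequence space `ℓ₂(ℕ)`. -/
abbrev ellTwo : Type := lp (fun _ : ℕ => ℝ) 2

/-- A bounded operator `T : X → Y` is 1-summing (absolutely summing). -/
def OneSumming {X Y : Type*} [NormedAddCommGroup X] [NormedSpace ℝ X]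
    [NormedAddCommGroup Y] [NormedSpace ℝ Y] (T : X →L[ℝ] Y) : Prop :=
  ∃ C : ℝ, 0 ≤ C ∧ ∀ (n : ℕ) (x : Fin n → X),
    ∑ k, ‖T (x k)‖ ≤ C * ⨆ ξ : {ξ : X →L[ℝ] ℝ // ‖ξ‖ ≤ 1}, ∑ k, |ξ.1 (x k)|

namespace GTSplit



variable {X : Type*} [NormedAddCommGroup X] [NormedSpace ℝ X]

/-- unit ball of the dual -/
abbrev DK (X : Type*) [NormedAddCommGroup X] [NormedSpace ℝ X] : Type _ :=
  {ξ : X →L[ℝ] ℝ // ‖ξ‖ ≤ 1}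

instance : Nonempty (DK X) := ⟨⟨0, by simp⟩⟩

/-- bounded functions on the dual ball -/
def BddF (X : Type*) [NormedAddCommGroup X] [NormedSpace ℝ X] :
    Submodule ℝ (DK X → ℝ) where
  carrier := {f | ∃ M, ∀ ξ, |f ξ| ≤ M}
  add_mem' := by
    rintro f g ⟨M, hM⟩ ⟨M', hM'⟩
    exact ⟨M + M', fun ξ => (abs_add_le _ _).trans (add_le_add (hM ξ) (hM' ξ))⟩
  zero_mem' := ⟨0, by simp⟩
  smul_mem' := by
    rintro c f ⟨M, hM⟩
    refine ⟨|c| * M, fun ξ => ?_⟩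
    simp only [Pi.smul_apply, smul_eq_mul, abs_mul]
    exact mul_le_mul_of_nonneg_left (hM ξ) (abs_nonneg c)

def supF (f : BddF X) : ℝ := ⨆ ξ, (f : DK X → ℝ) ξ

theorem bddAbove_supF (f : BddF X) : BddAbove (Set.range (f : DK X → ℝ)) := by
  obtain ⟨M, hM⟩ := f.2
  exact ⟨M, by rintro - ⟨ξ, rfl⟩; exact (abs_le.mp (hM ξ)).2⟩

theorem le_supF (f : BddF X) (ξ : DK X) : (f : DK X → ℝ) ξ ≤ supF f :=
  le_ciSup (bddAbove_supF f) ξ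

theorem supF_le {f : BddF X} {M : ℝ} (h : ∀ ξ, (f : DK X → ℝ) ξ ≤ M) : supF f ≤ M :=
  ciSup_le h

@[simp] theorem supF_zero : supF (0 : BddF X) = 0 := by
  have : ∀ ξ : DK X, ((0 : BddF X) : DK X → ℝ) ξ = 0 := fun ξ => rfl
  refine le_antisymm (supF_le fun ξ => (this ξ).le) ?_
  simpa [this] using le_supF (0 : BddF X) ⟨0, by simp⟩

theorem supF_add (f g : BddF X) : supF (f + g) ≤ supF f + supF g := by
  refine supF_le fun ξ => ?_
  have : ((f + g : BddF X) : DK X → ℝ) ξ = (f : DK X → ℝ) ξ + (g : DK X → ℝ) ξ := rfl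
  rw [this]
  exact add_le_add (le_supF f ξ) (le_supF g ξ)

theorem supF_smul (c : ℝ) (hc : 0 ≤ c) (f : BddF X) : supF (c • f) = c * supF f := by
  rw [supF, supF, Real.mul_iSup_of_nonneg hc]
  rfl

/-- the basic quadratic functions on the dual ball, as a bounded function -/
def wB (x y : X) : BddF X :=
  ⟨fun ξ => ξ.1 x * ξ.1 y, ⟨‖x‖ * ‖y‖, by
    intro ξ
    rw [abs_mul]
    have hx : |ξ.1 x| ≤ ‖x‖ := by
      calc |ξ.1 x| = ‖ξ.1 x‖ := (Real.norm_eq_abs _).symm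
      _ ≤ ‖ξ.1‖ * ‖x‖ := ξ.1.le_opNorm x
      _ ≤ 1 * ‖x‖ := mul_le_mul_of_nonneg_right ξ.2 (norm_nonneg x)
      _ = ‖x‖ := one_mul _
    have hy : |ξ.1 y| ≤ ‖y‖ := by
      calc |ξ.1 y| = ‖ξ.1 y‖ := (Real.norm_eq_abs _).symm
      _ ≤ ‖ξ.1‖ * ‖y‖ := ξ.1.le_opNorm y
      _ ≤ 1 * ‖y‖ := mul_le_mul_of_nonneg_right ξ.2 (norm_nonneg y)
      _ = ‖y‖ := one_mul _
    exact mul_le_mul hx hy (abs_nonneg _) (norm_nonneg _)⟩⟩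

@[simp] theorem wB_apply (x y : X) (ξ : DK X) : (wB x y : DK X → ℝ) ξ = ξ.1 x * ξ.1 y := rfl

theorem wB_add_left (x x' y : X) : wB (x + x') y = wB x y + wB x' y := by
  apply Subtype.ext; funext ξ; simp [add_mul]

theorem wB_smul_left (c : ℝ) (x y : X) : wB (c • x) y = c • wB x y := by
  apply Subtype.ext; funext ξ; simp [mul_assoc]

theorem wB_comm (x y : X) : wB x y = wB y x := by
  apply Subtype.ext; funext ξ; simp [mul_comm]

theorem wB_smul_smul (c : ℝ) (x y : X) : wB (c • x) (c • y) = (c * c) • wB x y := by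
  rw [wB_smul_left, wB_comm, wB_smul_left, wB_comm, smul_smul]

theorem exists_dominating {E : Type*} [NormedAddCommGroup E] [NormedSpace ℝ E]
    (N : Submodule ℝ X) (T : N →L[ℝ] E) (C : ℝ) (hC : 0 < C)
    (h2 : ∀ (n : ℕ) (x : Fin n → N),
      ∑ k, ‖T (x k)‖ ^ 2 ≤ C ^ 2 * supF (∑ k, wB ((x k : X)) (x k))) :
    ∃ m : BddF X →ₗ[ℝ] ℝ, (∀ f, m f ≤ supF f) ∧
      ∀ x : N, ‖T x‖ ^ 2 ≤ C ^ 2 * m (wB (x : X) (x : X)) := by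
  set Fam := Σ n : ℕ, Fin n → N with hFam
  set G : Fam → BddF X := fun c => ∑ k, wB ((c.2 k : X)) (c.2 k) with hG
  set Hq : Fam → ℝ := fun c => (C ^ 2)⁻¹ * ∑ k, ‖T (c.2 k)‖ ^ 2 with hHq
  have hC2 : (0:ℝ) < C ^ 2 := by positivity
  have key : ∀ c : Fam, Hq c ≤ supF (G c) := by
    intro c
    simp only [hHq]
    rw [inv_mul_le_iff₀ hC2]
    exact h2 c.1 c.2
  -- the inf-convolution sublinear functional
  set q : BddF X → ℝ := fun f => ⨅ c : Fam, (supF (f + G c) - Hq c) with hq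
  have hlow : ∀ (f : BddF X) (c : Fam), -supF (-f) ≤ supF (f + G c) - Hq c := by
    intro f c
    have h1 : supF (G c) ≤ supF (f + G c) + supF (-f) := by
      have h2' := supF_add (f + G c) (-f)
      have h3' : f + G c + -f = G c := by abel
      rw [h3'] at h2'
      exact h2'
    have h2 := key c
    linarith
  have hbdd : ∀ f : BddF X, BddBelow (Set.range fun c : Fam => supF (f + G c) - Hq c) := by
    intro f
    exact ⟨-supF (-f), by rintro - ⟨c, rfl⟩; exact hlow f c⟩
  have q_le : ∀ (f : BddF X) (c : Fam), q f ≤ supF (f + G c) - Hq c := by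
    intro f c
    exact ciInf_le (hbdd f) c
  have low_q : ∀ f : BddF X, -supF (-f) ≤ q f := by
    intro f
    exact le_ciInf (hlow f)
  have famzero : ∀ f : BddF X, q f ≤ supF f := by
    intro f
    have := q_le f ⟨0, Fin.elim0⟩
    simpa [hG, hHq] using this
  -- subadditivity
  have q_add : ∀ f g : BddF X, q (f + g) ≤ q f + q g := by
    intro f g
    have hcc : ∀ c c' : Fam,
        q (f + g) ≤ (supF (f + G c) - Hq c) + (supF (g + G c') - Hq c') := by
      intro c c'
      have hq1 := q_le (f + g) ⟨c.1 + c'.1, Fin.append c.2 c'.2⟩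
      have hGsum : G ⟨c.1 + c'.1, Fin.append c.2 c'.2⟩ = G c + G c' := by
        simp only [hG]
        rw [Fin.sum_univ_add]
        congr 1
        · exact Finset.sum_congr rfl fun i _ => by simp [Fin.append_left]
        · exact Finset.sum_congr rfl fun i _ => by simp [Fin.append_right]
      have hHsum : Hq ⟨c.1 + c'.1, Fin.append c.2 c'.2⟩ = Hq c + Hq c' := by
        simp only [hHq]
        rw [Fin.sum_univ_add, mul_add]
        congr 1
        · exact congrArg _ (Finset.sum_congr rfl fun i _ => by rw [Fin.append_left])
        · exact congrArg _ (Finset.sum_congr rfl fun i _ => by rw [Fin.append_right])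
      rw [hGsum, hHsum] at hq1
      have : supF (f + g + (G c + G c')) ≤ supF (f + G c) + supF (g + G c') := by
        have heq : f + g + (G c + G c') = (f + G c) + (g + G c') := by abel
        rw [heq]
        exact supF_add _ _
      linarith
    have h1 : ∀ c' : Fam, q (f + g) - (supF (g + G c') - Hq c') ≤ q f := by
      intro c'
      refine le_ciInf fun c => ?_
      have := hcc c c'
      linarith
    have h2 : q (f + g) - q f ≤ q g := by
      refine le_ciInf fun c' => ?_
      have := h1 c'
      linarith
    linarith
  -- positive homogeneity
  have q_smul_le : ∀ (c : ℝ), 0 < c → ∀ f : BddF X, q (c • f) ≤ c * q f := by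
    intro c hc f
    have hterm : ∀ fam : Fam, q (c • f) ≤ c * (supF (f + G fam) - Hq fam) := by
      intro fam
      set fam' : Fam := ⟨fam.1, fun i => Real.sqrt c • fam.2 i⟩ with hfam'
      have hGf : G fam' = c • G fam := by
        simp only [hG, hfam']
        rw [Finset.smul_sum]
        apply Finset.sum_congr rfl
        intro i _
        have hcoe : ((Real.sqrt c • fam.2 i : N) : X) = Real.sqrt c • ((fam.2 i : N) : X) := rfl
        rw [hcoe, wB_smul_smul, Real.mul_self_sqrt hc.le]
      have hHf : Hq fam' = c * Hq fam := by
        have hpt : ∀ i, ‖T (Real.sqrt c • fam.2 i)‖ ^ 2 = c * ‖T (fam.2 i)‖ ^ 2 := by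
          intro i
          rw [map_smul, norm_smul, mul_pow, Real.norm_eq_abs, sq_abs, Real.sq_sqrt hc.le]
        simp only [hHq, hfam', hpt]
        rw [← Finset.mul_sum]
        ring
      have := q_le (c • f) fam'
      rw [hGf, hHf] at this
      have heq : c • f + c • G fam = c • (f + G fam) := by rw [smul_add]
      rw [heq, supF_smul c hc.le] at this
      linarith [this]
    have h1 : c⁻¹ * q (c • f) ≤ q f := by
      refine le_ciInf fun fam => ?_
      have := hterm fam
      rw [inv_mul_le_iff₀ hc]
      linarith
    calc q (c • f) = c * (c⁻¹ * q (c • f)) := by field_simp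
    _ ≤ c * q f := mul_le_mul_of_nonneg_left h1 hc.le
  have q_smul : ∀ (c : ℝ), 0 < c → ∀ f : BddF X, q (c • f) = c * q f := by
    intro c hc f
    refine le_antisymm (q_smul_le c hc f) ?_
    have := q_smul_le c⁻¹ (by positivity) (c • f)
    rw [smul_smul, inv_mul_cancel₀ hc.ne', one_smul] at this
    calc c * q f ≤ c * (c⁻¹ * q (c • f)) := mul_le_mul_of_nonneg_left this hc.le
    _ = q (c • f) := by field_simp
  -- Hahn–Banach
  obtain ⟨m, -, hm⟩ := exists_extension_of_le_sublinear (⊥ : BddF X →ₗ.[ℝ] ℝ) q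
    q_smul q_add (by
      rintro x
      have h1 : ((⊥ : BddF X →ₗ.[ℝ] ℝ)) x = 0 := rfl
      rw [h1]
      have h0 : (x : BddF X) = 0 := by
        have hmem : (x : BddF X) ∈ (⊥ : Submodule ℝ (BddF X)) := x.2
        exact (Submodule.mem_bot ℝ).mp hmem
      rw [h0]
      have := low_q (0 : BddF X)
      simpa using this)
  refine ⟨m, fun f => (hm f).trans (famzero f), fun x => ?_⟩
  have hq1 := q_le (-(wB (x : X) (x : X))) ⟨1, fun _ => x⟩
  have hG1 : G ⟨1, fun _ => x⟩ = wB (x : X) (x : X) := by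
    simp only [hG]
    simp
  have hH1 : Hq ⟨1, fun _ => x⟩ = (C ^ 2)⁻¹ * ‖T x‖ ^ 2 := by
    simp only [hHq]
    simp
  rw [hG1, hH1, neg_add_cancel, supF_zero] at hq1
  have h3 : m (-(wB (x : X) (x : X))) ≤ -( (C ^ 2)⁻¹ * ‖T x‖ ^ 2) := by
    have := (hm (-(wB (x : X) (x : X)))).trans hq1
    linarith
  rw [map_neg] at h3
  have h4 : (C ^ 2)⁻¹ * ‖T x‖ ^ 2 ≤ m (wB (x : X) (x : X)) := by linarith
  calc ‖T x‖ ^ 2 = C ^ 2 * ((C ^ 2)⁻¹ * ‖T x‖ ^ 2) := by field_simp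
  _ ≤ C ^ 2 * m (wB (x : X) (x : X)) := mul_le_mul_of_nonneg_left h4 hC2.le



variable {X : Type*} [NormedAddCommGroup X] [NormedSpace ℝ X]

def NullSp (B : X →ₗ[ℝ] X →ₗ[ℝ] ℝ) : Submodule ℝ X := LinearMap.ker B

def PreHilb (B : X →ₗ[ℝ] X →ₗ[ℝ] ℝ) : Type _ := X ⧸ NullSp B

instance (B : X →ₗ[ℝ] X →ₗ[ℝ] ℝ) : AddCommGroup (PreHilb B) :=
  inferInstanceAs (AddCommGroup (X ⧸ NullSp B))

instance (B : X →ₗ[ℝ] X →ₗ[ℝ] ℝ) : Module ℝ (PreHilb B) :=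
  inferInstanceAs (Module ℝ (X ⧸ NullSp B))

def toPre (B : X →ₗ[ℝ] X →ₗ[ℝ] ℝ) : X →ₗ[ℝ] PreHilb B := (NullSp B).mkQ

theorem toPre_surjective (B : X →ₗ[ℝ] X →ₗ[ℝ] ℝ) : Function.Surjective (toPre B) :=
  Submodule.Quotient.mk_surjective (NullSp B)

theorem cs_ineq (B : X →ₗ[ℝ] X →ₗ[ℝ] ℝ) (hsymm : ∀ x y, B x y = B y x)
    (hpos : ∀ x, 0 ≤ B x x) (x y : X) : (B x y) ^ 2 ≤ B x x * B y y := by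
  have h : ∀ t : ℝ, 0 ≤ B y y * (t * t) + (2 * B x y) * t + B x x := by
    intro t
    have h0 := hpos (x + t • y)
    have expand : B (x + t • y) (x + t • y)
        = B y y * (t * t) + (2 * B x y) * t + B x x := by
      simp only [map_add, map_smul, LinearMap.add_apply, LinearMap.smul_apply, smul_eq_mul]
      rw [hsymm y x]
      ring
    rw [expand] at h0
    exact h0
  have hd := discrim_le_zero h
  rw [discrim] at hd
  nlinarith [hd]

theorem mem_nullSp_iff (B : X →ₗ[ℝ] X →ₗ[ℝ] ℝ) (hsymm : ∀ x y, B x y = B y x)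
    (hpos : ∀ x, 0 ≤ B x x) (x : X) : x ∈ NullSp B ↔ B x x = 0 := by
  constructor
  · intro hx
    have : B x = 0 := hx
    rw [this]
    rfl
  · intro hx
    have : B x = 0 := by
      ext y
      have h1 := cs_ineq B hsymm hpos x y
      rw [hx, zero_mul] at h1
      have h2 : (0:ℝ) ≤ (B x y) ^ 2 := sq_nonneg _
      have : (B x y) ^ 2 = 0 := le_antisymm h1 h2
      have := pow_eq_zero_iff (n := 2) (by norm_num) |>.mp this
      simpa using this
    exact this

/-- the descended bilinear form on the quotient -/
def preForm (B : X →ₗ[ℝ] X →ₗ[ℝ] ℝ) (hsymm : ∀ x y, B x y = B y x) :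
    PreHilb B →ₗ[ℝ] PreHilb B →ₗ[ℝ] ℝ :=
  (NullSp B).liftQ
    { toFun := fun x => (NullSp B).liftQ (B x) (by
        intro y hy
        have hy' : B y = 0 := hy
        have : B x y = B y x := hsymm x y
        rw [LinearMap.mem_ker, this, hy']
        rfl)
      map_add' := by
        intro a b
        apply LinearMap.ext
        intro q
        obtain ⟨z, rfl⟩ := toPre_surjective B q
        show B (a + b) z = B a z + B b z
        simp
      map_smul' := by
        intro c a
        apply LinearMap.ext
        intro q
        obtain ⟨z, rfl⟩ := toPre_surjective B q
        show B (c • a) z = c * B a z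
        simp }
    (by
      intro x hx
      have hx' : B x = 0 := hx
      rw [LinearMap.mem_ker]
      apply LinearMap.ext
      intro q
      obtain ⟨z, rfl⟩ := toPre_surjective B q
      show B x z = 0
      rw [hx']
      rfl)

theorem preForm_mk (B : X →ₗ[ℝ] X →ₗ[ℝ] ℝ) (hsymm : ∀ x y, B x y = B y x) (x y : X) :
    preForm B hsymm (toPre B x) (toPre B y) = B x y := by
  rfl

/-- the inner-product core on the quotient -/
def preCore (B : X →ₗ[ℝ] X →ₗ[ℝ] ℝ) (hsymm : ∀ x y, B x y = B y x)
    (hpos : ∀ x, 0 ≤ B x x) : InnerProductSpace.Core ℝ (PreHilb B) where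
  inner p q := preForm B hsymm p q
  conj_inner_symm := by
    intro p q
    obtain ⟨x, rfl⟩ := toPre_surjective B p
    obtain ⟨y, rfl⟩ := toPre_surjective B q
    show (starRingEnd ℝ) (B y x) = B x y
    simp only [starRingEnd_apply, star_trivial]
    exact hsymm y x
  re_inner_nonneg := by
    intro p
    obtain ⟨x, rfl⟩ := toPre_surjective B p
    exact hpos x
  add_left := by
    intro p q r
    obtain ⟨x, rfl⟩ := toPre_surjective B p
    obtain ⟨y, rfl⟩ := toPre_surjective B q
    obtain ⟨z, rfl⟩ := toPre_surjective B r
    show B (x + y) z = B x z + B y z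
    simp
  smul_left := by
    intro p q r
    obtain ⟨x, rfl⟩ := toPre_surjective B p
    obtain ⟨y, rfl⟩ := toPre_surjective B q
    show B (r • x) y = (starRingEnd ℝ) r * B x y
    simp [starRingEnd_apply]
  definite := by
    intro p hp
    obtain ⟨x, rfl⟩ := toPre_surjective B p
    have hp' : B x x = 0 := hp
    have hx : x ∈ NullSp B := (mem_nullSp_iff B hsymm hpos x).mpr hp'
    show Submodule.Quotient.mk x = (0 : X ⧸ NullSp B)
    rwa [Submodule.Quotient.mk_eq_zero]

theorem exists_extension_of_dominated {E : Type*} [NormedAddCommGroup E] [NormedSpace ℝ E]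
    [CompleteSpace E] (B : X →ₗ[ℝ] X →ₗ[ℝ] ℝ) (hsymm : ∀ x y, B x y = B y x)
    (hpos : ∀ x, 0 ≤ B x x) (hbound : ∀ x, B x x ≤ ‖x‖ ^ 2)
    (N : Submodule ℝ X) (T : N →L[ℝ] E) (D : ℝ) (hD : 0 ≤ D)
    (hdom : ∀ x : N, ‖T x‖ ^ 2 ≤ D * B x x) :
    ∃ S : X →L[ℝ] E, ∀ x : N, S ((x : N) : X) = T x := by
  classical
  letI : NormedAddCommGroup (PreHilb B) := (preCore B hsymm hpos).toNormedAddCommGroup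
  letI : InnerProductSpace ℝ (PreHilb B) := InnerProductSpace.ofCore _
  have hinner : ∀ x y : X, (inner ℝ (toPre B x) (toPre B y) : ℝ) = B x y := by
    intro x y
    exact preForm_mk B hsymm x y
  have hnormsq : ∀ x : X, ‖toPre B x‖ ^ 2 = B x x := by
    intro x
    rw [← real_inner_self_eq_norm_sq, hinner]
  have hbnd : ∀ x : X, ‖toPre B x‖ ≤ 1 * ‖x‖ := by
    intro x
    rw [one_mul]
    have h1 : ‖toPre B x‖ ^ 2 ≤ ‖x‖ ^ 2 := by rw [hnormsq]; exact hbound x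
    have := Real.sqrt_le_sqrt h1
    rwa [Real.sqrt_sq (norm_nonneg _), Real.sqrt_sq (norm_nonneg _)] at this
  set iC : X →L[ℝ] PreHilb B := LinearMap.mkContinuous (toPre B) 1 hbnd with hiC
  set H := UniformSpace.Completion (PreHilb B) with hH
  set ic : X →L[ℝ] H := (UniformSpace.Completion.toComplL (𝕜 := ℝ)).comp iC with hic
  have hic_apply : ∀ x : X, ic x = (toPre B x : H) := by
    intro x
    rw [hic]
    simp [UniformSpace.Completion.coe_toComplL, hiC]
  have hic_norm : ∀ x : X, ‖ic x‖ ^ 2 = B x x := by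
    intro x
    rw [hic_apply, UniformSpace.Completion.norm_coe, hnormsq]
  set f : N →L[ℝ] H := ic.comp N.subtypeL with hf
  set fℓ : N →ₗ[ℝ] H := (f : N →ₗ[ℝ] H) with hfℓ
  have hf_norm : ∀ x : N, ‖fℓ x‖ ^ 2 = B (x : X) (x : X) := by
    intro x
    exact hic_norm (x : X)
  have hTf : ∀ x : N, ‖T x‖ ≤ Real.sqrt D * ‖fℓ x‖ := by
    intro x
    have h1 : ‖T x‖ ^ 2 ≤ (Real.sqrt D * ‖fℓ x‖) ^ 2 := by
      rw [mul_pow, Real.sq_sqrt hD, hf_norm]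
      exact hdom x
    have := Real.sqrt_le_sqrt h1
    rwa [Real.sqrt_sq (norm_nonneg _),
      Real.sqrt_sq (by positivity : (0:ℝ) ≤ Real.sqrt D * ‖fℓ x‖)] at this
  set M0 : Submodule ℝ H := LinearMap.range fℓ with hM0
  have hker : LinearMap.ker fℓ ≤ LinearMap.ker (T : N →ₗ[ℝ] E) := by
    intro x hx
    have hx' : fℓ x = 0 := hx
    have h1 := hTf x
    rw [hx', norm_zero, mul_zero] at h1
    have : ‖T x‖ = 0 := le_antisymm h1 (norm_nonneg _)
    simpa [norm_eq_zero] using this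
  set g1 : (N ⧸ LinearMap.ker fℓ) →ₗ[ℝ] E :=
    (LinearMap.ker fℓ).liftQ (T : N →ₗ[ℝ] E) hker with hg1
  set eqv := fℓ.quotKerEquivRange with heqv
  set u0ℓ : M0 →ₗ[ℝ] E := g1.comp (eqv.symm : ↥(LinearMap.range fℓ) →ₗ[ℝ] _) with hu0ℓ
  have hu0 : ∀ x : N, u0ℓ ⟨fℓ x, LinearMap.mem_range_self fℓ x⟩ = T x := by
    intro x
    have h1 : eqv.symm ⟨fℓ x, LinearMap.mem_range_self fℓ x⟩
        = Submodule.Quotient.mk x := by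
      rw [LinearEquiv.symm_apply_eq]
      apply Subtype.ext
      exact (fℓ.quotKerEquivRange_apply_mk x).symm
    rw [hu0ℓ]
    simp only [LinearMap.coe_comp, Function.comp_apply, LinearEquiv.coe_coe]
    rw [h1, hg1, Submodule.liftQ_apply]
    rfl
  have hu0bound : ∀ v : M0, ‖u0ℓ v‖ ≤ Real.sqrt D * ‖v‖ := by
    intro v
    obtain ⟨x, hx⟩ := v.2
    have hv : v = ⟨fℓ x, LinearMap.mem_range_self fℓ x⟩ := by
      apply Subtype.ext
      exact hx.symm
    rw [hv, hu0 x]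
    have : ‖(⟨fℓ x, LinearMap.mem_range_self fℓ x⟩ : M0)‖ = ‖fℓ x‖ := rfl
    rw [this]
    exact hTf x
  set u0 : M0 →L[ℝ] E := u0ℓ.mkContinuous (Real.sqrt D) hu0bound with hu0c
  set M : Submodule ℝ H := M0.topologicalClosure with hM
  haveI hMc : CompleteSpace M := (Submodule.isClosed_topologicalClosure M0).completeSpace_coe
  set inclL : M0 →ₗ[ℝ] M := Submodule.inclusion (M0.le_topologicalClosure) with hinclL
  have hincl_norm : ∀ v : M0, ‖inclL v‖ = ‖v‖ := fun v => rfl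
  set incl : M0 →L[ℝ] M := inclL.mkContinuous 1 (fun v => by rw [hincl_norm, one_mul]) with hincl
  have hisom : Isometry incl := AddMonoidHomClass.isometry_of_norm incl hincl_norm
  have hdense : DenseRange incl := by
    intro m
    have himg : Subtype.val '' (Set.range incl) = (M0 : Set H) := by
      ext z
      constructor
      · rintro ⟨-, ⟨v, rfl⟩, rfl⟩
        exact v.2
      · rintro hz
        exact ⟨incl ⟨z, hz⟩, ⟨⟨z, hz⟩, rfl⟩, rfl⟩
    rw [closure_subtype, himg]
    have h2 : (M : Set H) = closure (M0 : Set H) := Submodule.topologicalClosure_coe M0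
    rw [← h2]
    exact m.2
  set u : M →L[ℝ] E := u0.extend incl with hu
  refine ⟨u.comp ((M.orthogonalProjectionOnto).comp ic), ?_⟩
  intro x
  have hmem0 : ic ((x : N) : X) ∈ M0 := ⟨x, rfl⟩
  have hmem : ic ((x : N) : X) ∈ M := M0.le_topologicalClosure hmem0
  have hproj : M.orthogonalProjectionOnto (ic ((x : N) : X)) = ⟨ic ((x : N) : X), hmem⟩ := by
    have := Submodule.orthogonalProjection_mem_subspace_eq_self (K := M) ⟨ic ((x : N) : X), hmem⟩
    exact this
  have hveq : (⟨ic ((x : N) : X), hmem⟩ : M) = incl ⟨ic ((x : N) : X), hmem0⟩ := rfl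
  have hext : u (incl ⟨ic ((x : N) : X), hmem0⟩) = u0 ⟨ic ((x : N) : X), hmem0⟩ :=
    ContinuousLinearMap.extend_eq (f := u0) (e := incl) hdense hisom.isUniformInducing _
  have hfx : (⟨ic ((x : N) : X), hmem0⟩ : M0) = ⟨fℓ x, LinearMap.mem_range_self fℓ x⟩ := by
    apply Subtype.ext
    rfl
  simp only [ContinuousLinearMap.comp_apply]
  rw [hproj, hveq, hext]
  have : u0 ⟨ic ((x : N) : X), hmem0⟩ = u0ℓ ⟨ic ((x : N) : X), hmem0⟩ := rfl
  rw [this, hfx, hu0 x]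


variable {X : Type*} [NormedAddCommGroup X] [NormedSpace ℝ X]

theorem supF_nonneg_of_nonneg {f : BddF X} (h : ∀ ξ, 0 ≤ (f : DK X → ℝ) ξ) : 0 ≤ supF f :=
  le_trans (h ⟨0, by simp⟩) (le_supF f ⟨0, by simp⟩)

set_option synthInstance.maxHeartbeats 1000000 in
theorem exists_extension_of_one_summing {E : Type*} [NormedAddCommGroup E] [NormedSpace ℝ E]
    [CompleteSpace E] (N : Submodule ℝ X) (T : N →L[ℝ] E) (C : ℝ) (hC : 0 < C)
    (hsum : ∀ (n : ℕ) (x : Fin n → N),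
      ∑ k, ‖T (x k)‖ ≤ C * ⨆ ξ : {ξ : N →L[ℝ] ℝ // ‖ξ‖ ≤ 1}, ∑ k, |ξ.1 (x k)|) :
    ∃ S : X →L[ℝ] E, ∀ x : N, S ((x : N) : X) = T x := by
  classical
  -- Step 1: the 2-summing inequality with functionals on the ambient space
  have h2 : ∀ (n : ℕ) (x : Fin n → N),
      ∑ k, ‖T (x k)‖ ^ 2 ≤ C ^ 2 * supF (∑ k, wB ((x k : X)) (x k)) := by
    intro n x
    set G : BddF X := ∑ k, wB ((x k : X)) (x k) with hG
    have hGapp : ∀ ξ : DK X, (G : DK X → ℝ) ξ = ∑ k, (ξ.1 ((x k : X))) ^ 2 := by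
      intro ξ
      rw [hG]
      rw [AddSubmonoidClass.coe_finset_sum]
      rw [Finset.sum_apply]
      exact Finset.sum_congr rfl fun k _ => by rw [wB_apply, sq]
    have hGnn : 0 ≤ supF G := by
      apply supF_nonneg_of_nonneg
      intro ξ
      rw [hGapp]
      exact Finset.sum_nonneg fun k _ => sq_nonneg _
    set a : Fin n → ℝ := fun k => ‖T (x k)‖ with ha
    set s : ℝ := ∑ k, a k ^ 2 with hs
    have hsnn : 0 ≤ s := Finset.sum_nonneg fun k _ => sq_nonneg _
    have h0 : ∑ k, ‖T (a k • x k)‖ = s := by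
      rw [hs]
      refine Finset.sum_congr rfl fun k _ => ?_
      rw [map_smul, norm_smul, ha]
      simp [sq]
    have h1 := hsum n (fun k => a k • x k)
    rw [h0] at h1
    -- bound the dual-ball sup
    have hξbound : ∀ ξ : {ξ : N →L[ℝ] ℝ // ‖ξ‖ ≤ 1},
        ∑ k, |ξ.1 ((a k • x k : N))| ≤ Real.sqrt s * Real.sqrt (supF G) := by
      intro ξ
      obtain ⟨g, hg_eq, hg_norm⟩ := exists_extension_norm_eq N ξ.1
      set ξ' : DK X := ⟨g, by rw [hg_norm]; exact ξ.2⟩ with hξ'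
      have hgx : ∀ k, g ((x k : X)) = ξ.1 (x k) := fun k => hg_eq (x k)
      have hstep1 : ∑ k, |ξ.1 ((a k • x k : N))| = ∑ k, a k * |ξ.1 (x k)| := by
        refine Finset.sum_congr rfl fun k _ => ?_
        rw [map_smul]
        rw [smul_eq_mul, abs_mul, ha]
        simp
      have hstep2 : (∑ k, a k * |ξ.1 (x k)|) ^ 2 ≤ s * ∑ k, (ξ.1 (x k)) ^ 2 := by
        have := Finset.sum_mul_sq_le_sq_mul_sq Finset.univ a (fun k => |ξ.1 (x k)|)
        simpa [hs, sq_abs] using this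
      have hstep3 : ∑ k, (ξ.1 (x k)) ^ 2 ≤ supF G := by
        have : ∑ k, (ξ.1 (x k)) ^ 2 = (G : DK X → ℝ) ξ' := by
          rw [hGapp]
          exact Finset.sum_congr rfl fun k _ => by rw [hξ']; simp [hgx k]
        rw [this]
        exact le_supF G ξ'
      have h4 : (∑ k, a k * |ξ.1 (x k)|) ^ 2 ≤ s * supF G :=
        hstep2.trans (mul_le_mul_of_nonneg_left hstep3 hsnn)
      rw [hstep1]
      have h5 : (0:ℝ) ≤ ∑ k, a k * |ξ.1 (x k)| :=
        Finset.sum_nonneg fun k _ => mul_nonneg (norm_nonneg _) (abs_nonneg _)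
      have h6 := Real.sqrt_le_sqrt h4
      rwa [Real.sqrt_sq h5, Real.sqrt_mul hsnn] at h6
    have h7 : (⨆ ξ : {ξ : N →L[ℝ] ℝ // ‖ξ‖ ≤ 1}, ∑ k, |ξ.1 ((a k • x k : N))|)
        ≤ Real.sqrt s * Real.sqrt (supF G) := by
      haveI : Nonempty {ξ : N →L[ℝ] ℝ // ‖ξ‖ ≤ 1} := ⟨⟨0, le_trans (le_of_eq ContinuousLinearMap.opNorm_zero) zero_le_one⟩⟩
      exact ciSup_le hξbound
    have h8 : s ≤ C * (Real.sqrt s * Real.sqrt (supF G)) :=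
      h1.trans (mul_le_mul_of_nonneg_left h7 hC.le)
    have hgoal : s ≤ C ^ 2 * supF G := by
      rcases eq_or_lt_of_le hsnn with hzero | hposs
      · rw [← hzero]
        positivity
      · have hsq : Real.sqrt s > 0 := Real.sqrt_pos.mpr hposs
        have h9 : Real.sqrt s ≤ C * Real.sqrt (supF G) := by
          have : Real.sqrt s * Real.sqrt s ≤ (C * Real.sqrt (supF G)) * Real.sqrt s := by
            rw [Real.mul_self_sqrt hsnn]
            calc s ≤ C * (Real.sqrt s * Real.sqrt (supF G)) := h8
            _ = C * Real.sqrt (supF G) * Real.sqrt s := by ring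
          exact le_of_mul_le_mul_right this hsq
        have h10 := mul_self_le_mul_self (Real.sqrt_nonneg s) h9
        rw [Real.mul_self_sqrt hsnn] at h10
        calc s ≤ (C * Real.sqrt (supF G)) * (C * Real.sqrt (supF G)) := h10
        _ = C ^ 2 * (Real.sqrt (supF G) * Real.sqrt (supF G)) := by ring
        _ = C ^ 2 * supF G := by rw [Real.mul_self_sqrt hGnn]
    calc ∑ k, ‖T (x k)‖ ^ 2 = s := by rw [hs]
    _ ≤ C ^ 2 * supF G := hgoal
  -- Step 2: dominating functional
  obtain ⟨m, hm_le, hm_dom⟩ := exists_dominating N T C hC h2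
  -- Step 3: the bilinear form
  set Bform : X →ₗ[ℝ] X →ₗ[ℝ] ℝ := LinearMap.mk₂ ℝ (fun x y => m (wB x y))
    (fun x x' y => by
      show m (wB (x + x') y) = m (wB x y) + m (wB x' y)
      rw [wB_add_left, map_add])
    (fun c x y => by
      show m (wB (c • x) y) = c • m (wB x y)
      rw [wB_smul_left, map_smul])
    (fun x y y' => by
      show m (wB x (y + y')) = m (wB x y) + m (wB x y')
      rw [wB_comm, wB_add_left, map_add, wB_comm y x, wB_comm y' x])
    (fun c x y => by
      show m (wB x (c • y)) = c • m (wB x y)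
      rw [wB_comm, wB_smul_left, map_smul, wB_comm y x])
    with hBform
  have hBapp : ∀ x y, Bform x y = m (wB x y) := fun x y => rfl
  have hBsymm : ∀ x y, Bform x y = Bform y x := by
    intro x y
    rw [hBapp, hBapp, wB_comm]
  have hBpos : ∀ x, 0 ≤ Bform x x := by
    intro x
    have h1 : m (-(wB x x)) ≤ supF (-(wB x x)) := hm_le _
    have h2' : supF (-(wB x x)) ≤ 0 := by
      refine supF_le fun ξ => ?_
      have : ((-(wB x x) : BddF X) : DK X → ℝ) ξ = -(ξ.1 x * ξ.1 x) := rfl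
      rw [this]
      nlinarith [sq_nonneg (ξ.1 x)]
    rw [map_neg] at h1
    rw [hBapp]
    linarith
  have hBbound : ∀ x, Bform x x ≤ ‖x‖ ^ 2 := by
    intro x
    rw [hBapp]
    refine (hm_le _).trans (supF_le fun ξ => ?_)
    rw [wB_apply]
    have hx : |ξ.1 x| ≤ ‖x‖ := by
      calc |ξ.1 x| = ‖ξ.1 x‖ := (Real.norm_eq_abs _).symm
      _ ≤ ‖ξ.1‖ * ‖x‖ := ξ.1.le_opNorm x
      _ ≤ 1 * ‖x‖ := mul_le_mul_of_nonneg_right ξ.2 (norm_nonneg x)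
      _ = ‖x‖ := one_mul _
    calc ξ.1 x * ξ.1 x = |ξ.1 x| * |ξ.1 x| := (abs_mul_abs_self _).symm
    _ ≤ ‖x‖ * ‖x‖ := mul_le_mul hx hx (abs_nonneg _) (norm_nonneg _)
    _ = ‖x‖ ^ 2 := (sq ‖x‖).symm
  have hBdom : ∀ x : N, ‖T x‖ ^ 2 ≤ C ^ 2 * Bform (x : X) (x : X) := by
    intro x
    rw [hBapp]
    exact hm_dom x
  exact exists_extension_of_dominated Bform hBsymm hBpos hBbound N T (C ^ 2)
    (by positivity) hBdom


theorem exists_lift {Z : Type*} [NormedAddCommGroup Z] [NormedSpace ℝ Z] [CompleteSpace Z]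
    {Y : Type*} [NormedAddCommGroup Y] [NormedSpace ℝ Y] [CompleteSpace Y]
    (φ : ellOne →L[ℝ] Z) (ρ : Y →L[ℝ] Z) (hρ : Function.Surjective ρ) :
    ∃ Φ : ellOne →L[ℝ] Y, ∀ a, ρ (Φ a) = φ a := by
  obtain ⟨c, hc, hsel⟩ := ρ.exists_preimage_norm_le hρ
  set e : ℕ → ellOne := fun n => lp.single 1 n (1 : ℝ) with he
  have hnorme : ∀ n, ‖e n‖ = 1 := by
    intro n
    have := lp.norm_single (p := (1 : ENNReal)) (E := fun _ : ℕ => ℝ) (by norm_num)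
      n (1 : ℝ)
    simpa [he] using this
  set y : ℕ → Y := fun n => Classical.choose (hsel (φ (e n))) with hy
  have hyρ : ∀ n, ρ (y n) = φ (e n) := fun n => (Classical.choose_spec (hsel (φ (e n)))).1
  have hynorm : ∀ n, ‖y n‖ ≤ c * ‖φ‖ := by
    intro n
    refine ((Classical.choose_spec (hsel (φ (e n)))).2).trans ?_
    have : ‖φ (e n)‖ ≤ ‖φ‖ := by
      simpa [hnorme n] using φ.le_opNorm (e n)
    nlinarith [this, hc.le]
  -- summability
  have habs : ∀ a : ellOne, Summable fun n => ‖(a : ℕ → ℝ) n‖ := by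
    intro a
    have := (lp.memℓp a).summable (p := (1 : ENNReal)) (by norm_num)
    simpa using this
  have hsum : ∀ a : ellOne, Summable fun n => (a : ℕ → ℝ) n • y n := by
    intro a
    refine Summable.of_norm ?_
    have h1 : ∀ n, ‖(a : ℕ → ℝ) n • y n‖ ≤ (c * ‖φ‖) * ‖(a : ℕ → ℝ) n‖ := by
      intro n
      rw [norm_smul]
      calc ‖(a : ℕ → ℝ) n‖ * ‖y n‖ ≤ ‖(a : ℕ → ℝ) n‖ * (c * ‖φ‖) :=
        mul_le_mul_of_nonneg_left (hynorm n) (norm_nonneg _)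
      _ = (c * ‖φ‖) * ‖(a : ℕ → ℝ) n‖ := by ring
    exact Summable.of_nonneg_of_le (fun n => norm_nonneg _) h1 (Summable.mul_left _ (habs a))
  have hnorm_a : ∀ a : ellOne, (∑' n, ‖(a : ℕ → ℝ) n‖) = ‖a‖ := by
    intro a
    have := lp.norm_eq_tsum_rpow (p := (1 : ENNReal)) (by norm_num) a
    simp only [ENNReal.toReal_one, Real.rpow_one, one_div_one] at this
    simp [this]
  set Φℓ : ellOne →ₗ[ℝ] Y :=
    { toFun := fun a => ∑' n, (a : ℕ → ℝ) n • y n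
      map_add' := by
        intro a b
        have h : ∀ n, ((a + b : ellOne) : ℕ → ℝ) n • y n
            = (a : ℕ → ℝ) n • y n + (b : ℕ → ℝ) n • y n := by
          intro n
          rw [lp.coeFn_add]
          simp [add_smul]
        simp only [h]
        exact Summable.tsum_add (hsum a) (hsum b)
      map_smul' := by
        intro r a
        have h : ∀ n, ((r • a : ellOne) : ℕ → ℝ) n • y n
            = r • ((a : ℕ → ℝ) n • y n) := by
          intro n
          rw [lp.coeFn_smul]
          simp [smul_smul]
        simp only [h, RingHom.id_apply]
        exact Summable.tsum_const_smul r (hsum a) } with hΦℓ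
  have hΦbound : ∀ a : ellOne, ‖Φℓ a‖ ≤ (c * ‖φ‖) * ‖a‖ := by
    intro a
    have hns : Summable fun n => ‖(a : ℕ → ℝ) n • y n‖ := by
      refine Summable.of_nonneg_of_le (fun n => norm_nonneg _) (fun n => ?_)
        (Summable.mul_right (c * ‖φ‖) (habs a))
      rw [norm_smul]
      exact mul_le_mul_of_nonneg_left (hynorm n) (norm_nonneg _)
    have h1 : ‖Φℓ a‖ ≤ ∑' n, ‖(a : ℕ → ℝ) n • y n‖ := norm_tsum_le_tsum_norm hns
    refine h1.trans ?_
    have h2 : ∀ n, ‖(a : ℕ → ℝ) n • y n‖ ≤ (c * ‖φ‖) * ‖(a : ℕ → ℝ) n‖ := by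
      intro n
      rw [norm_smul]
      calc ‖(a : ℕ → ℝ) n‖ * ‖y n‖ ≤ ‖(a : ℕ → ℝ) n‖ * (c * ‖φ‖) :=
        mul_le_mul_of_nonneg_left (hynorm n) (norm_nonneg _)
      _ = (c * ‖φ‖) * ‖(a : ℕ → ℝ) n‖ := by ring
    calc (∑' n, ‖(a : ℕ → ℝ) n • y n‖) ≤ ∑' n, (c * ‖φ‖) * ‖(a : ℕ → ℝ) n‖ := by
          refine Summable.tsum_le_tsum h2 ?_ (Summable.mul_left _ (habs a))
          exact Summable.of_nonneg_of_le (fun n => norm_nonneg _) h2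
            (Summable.mul_left _ (habs a))
      _ = (c * ‖φ‖) * ∑' n, ‖(a : ℕ → ℝ) n‖ := by rw [tsum_mul_left]
      _ = (c * ‖φ‖) * ‖a‖ := by rw [hnorm_a a]
  refine ⟨Φℓ.mkContinuous (c * ‖φ‖) hΦbound, ?_⟩
  intro a
  have key : ρ (Φℓ a) = φ a := by
    have h1 : ρ (Φℓ a) = ∑' n, (a : ℕ → ℝ) n • ρ (y n) := by
      simp only [hΦℓ, LinearMap.coe_mk, AddHom.coe_mk]
      rw [ρ.map_tsum (hsum a)]
      simp
    have h2 : HasSum (fun n => lp.single (1 : ENNReal) n ((a : ℕ → ℝ) n)) a :=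
      lp.hasSum_single (by norm_num) a
    have h3 : HasSum (fun n => φ (lp.single (1 : ENNReal) n ((a : ℕ → ℝ) n))) (φ a) :=
      h2.mapL φ
    have h4 : ∀ n, φ (lp.single (1 : ENNReal) n ((a : ℕ → ℝ) n)) = (a : ℕ → ℝ) n • φ (e n) := by
      intro n
      have : lp.single (1 : ENNReal) n ((a : ℕ → ℝ) n) = (a : ℕ → ℝ) n • e n := by
        rw [he]
        have := lp.single_smul (E := fun _ : ℕ => ℝ) (1 : ENNReal) n ((a : ℕ → ℝ) n) (1 : ℝ)
        simpa [smul_eq_mul] using this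
      rw [this, map_smul]
    rw [h1]
    have h5 := h3
    simp only [h4] at h5
    calc (∑' n, (a : ℕ → ℝ) n • ρ (y n)) = ∑' n, (a : ℕ → ℝ) n • φ (e n) := by
          simp only [hyρ]
      _ = φ a := h5.tsum_eq
  exact key

end GTSplit

set_option maxHeartbeats 3200000 in
set_option synthInstance.maxHeartbeats 1000000 in
/-- If every bounded operator `ker φ → ℓ₂` is 1-summing, then every short exact
sequence `0 → ℓ₂ → Y → Z → 0` splits. -/
theorem gt_implies_splitting (Z : Type*) [NormedAddCommGroup Z] [NormedSpace ℝ Z]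
    [CompleteSpace Z] [TopologicalSpace.SeparableSpace Z]
    (φ : ellOne →L[ℝ] Z) (hφ : Function.Surjective φ)
    (hGT : ∀ T : (LinearMap.ker (φ : ellOne →ₗ[ℝ] Z)) →L[ℝ] ellTwo, OneSumming T) :
    ∀ (Y : Type) (_ : NormedAddCommGroup Y) (_ : NormedSpace ℝ Y)
      (_ : CompleteSpace Y) (j : ellTwo →L[ℝ] Y) (ρ : Y →L[ℝ] Z),
      Function.Injective j → IsClosed (Set.range j) → Function.Surjective ρ →
      (LinearMap.ker (ρ : Y →ₗ[ℝ] Z) : Set Y) = Set.range j →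
      ∃ R : Y →L[ℝ] ellTwo, ∀ v : ellTwo, R (j v) = v := by
  intro Y _ _ _ j ρ hj hjcl hρ hker
  classical
  -- lift φ through ρ
  obtain ⟨Φ, hΦ⟩ := GTSplit.exists_lift φ ρ hρ
  set Kρ : Submodule ℝ Y := LinearMap.ker (ρ : Y →ₗ[ℝ] Z) with hKρ
  haveI : CompleteSpace Kρ := (ContinuousLinearMap.isClosed_ker ρ).completeSpace_coe
  have hjmem : ∀ v : ellTwo, j v ∈ Kρ := by
    intro v
    show j v ∈ (Kρ : Set Y)
    rw [hKρ, hker]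
    exact ⟨v, rfl⟩
  set j' : ellTwo →L[ℝ] Kρ := j.codRestrict Kρ hjmem with hj'
  have hj'ker : LinearMap.ker (j' : ellTwo →ₗ[ℝ] Kρ) = ⊥ := by
    ext w
    simp only [LinearMap.mem_ker, Submodule.mem_bot]
    constructor
    · intro hw
      have h1 : j w = 0 := by
        have h2 := congrArg (fun u : Kρ => (u : Y)) hw
        simpa [hj', ContinuousLinearMap.coe_codRestrict_apply] using h2
      apply hj
      rw [h1, map_zero]
    · intro hw
      rw [hw, map_zero]
  have hj'range : LinearMap.range (j' : ellTwo →ₗ[ℝ] Kρ) = ⊤ := by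
    rw [LinearMap.range_eq_top]
    rintro ⟨y, hy⟩
    have : y ∈ Set.range j := by rw [← hker]; exact hy
    obtain ⟨v, rfl⟩ := this
    exact ⟨v, rfl⟩
  set jeq := ContinuousLinearEquiv.ofBijective j' hj'ker hj'range with hjeq
  have hjeq_apply : ∀ v, jeq v = j' v := fun v => rfl
  -- the operator on the kernel
  set N : Submodule ℝ ellOne := LinearMap.ker (φ : ellOne →ₗ[ℝ] Z) with hN
  have hΦN : ∀ x : N, Φ ((x : N) : ellOne) ∈ Kρ := by
    intro x
    show ρ (Φ ((x : N) : ellOne)) = 0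
    rw [hΦ]
    exact x.2
  set ΦN : N →L[ℝ] Kρ := (Φ.comp N.subtypeL).codRestrict Kρ (fun x => hΦN x) with hΦNdef
  set T : N →L[ℝ] ellTwo := (jeq.symm : Kρ →L[ℝ] ellTwo).comp ΦN with hT
  obtain ⟨C, hC0, hsum⟩ := hGT T
  have hsup_nonneg : ∀ (n : ℕ) (x : Fin n → N),
      0 ≤ ⨆ ξ : {ξ : N →L[ℝ] ℝ // ‖ξ‖ ≤ 1}, ∑ k, |ξ.1 (x k)| := by
    intro n x
    by_cases hb : BddAbove (Set.range fun ξ : {ξ : N →L[ℝ] ℝ // ‖ξ‖ ≤ 1} =>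
      ∑ k, |ξ.1 (x k)|)
    · refine le_trans ?_ (le_ciSup hb ⟨0, le_trans (le_of_eq ContinuousLinearMap.opNorm_zero)
        zero_le_one⟩)
      simp
    · rw [Real.iSup_of_not_bddAbove hb]
  have hsum' : ∀ (n : ℕ) (x : Fin n → N),
      ∑ k, ‖T (x k)‖ ≤ (C + 1) * ⨆ ξ : {ξ : N →L[ℝ] ℝ // ‖ξ‖ ≤ 1}, ∑ k, |ξ.1 (x k)| := by
    intro n x
    refine (hsum n x).trans ?_
    exact mul_le_mul_of_nonneg_right (by linarith) (hsup_nonneg n x)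
  obtain ⟨S, hS⟩ := GTSplit.exists_extension_of_one_summing N T (C + 1)
    (by linarith) hsum'
  -- the corrected lift kills the kernel
  set Ψ : ellOne →L[ℝ] Y := Φ - j.comp S with hΨ
  have hρj : ∀ v : ellTwo, ρ (j v) = 0 := fun v => hjmem v
  have hρΨ : ∀ a, ρ (Ψ a) = φ a := by
    intro a
    rw [hΨ]
    simp only [ContinuousLinearMap.coe_sub', Pi.sub_apply, ContinuousLinearMap.comp_apply,
      map_sub]
    rw [hρj (S a), hΦ a, sub_zero]
  have hΨker : ∀ a : ellOne, φ a = 0 → Ψ a = 0 := by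
    intro a ha
    have hamem : a ∈ N := ha
    have h1 : S a = T ⟨a, hamem⟩ := hS ⟨a, hamem⟩
    have h2 : j (T ⟨a, hamem⟩) = Φ a := by
      rw [hT]
      simp only [ContinuousLinearMap.comp_apply]
      have h3 : j' (jeq.symm (ΦN ⟨a, hamem⟩)) = ΦN ⟨a, hamem⟩ := by
        have := jeq.apply_symm_apply (ΦN ⟨a, hamem⟩)
        rwa [hjeq_apply] at this
      have h4 : (j ((jeq.symm : Kρ →L[ℝ] ellTwo) (ΦN ⟨a, hamem⟩)) : Y)
          = ((ΦN ⟨a, hamem⟩ : Kρ) : Y) := by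
        have := congrArg (fun w : Kρ => (w : Y)) h3
        simpa [hj', ContinuousLinearMap.coe_codRestrict_apply] using this
      rw [h4]
      rfl
    rw [hΨ]
    simp only [ContinuousLinearMap.coe_sub', Pi.sub_apply, ContinuousLinearMap.comp_apply]
    rw [h1, h2, sub_self]
  have hwd : ∀ a b : ellOne, φ a = φ b → Ψ a = Ψ b := by
    intro a b hab
    have : Ψ (a - b) = 0 := hΨker _ (by rw [map_sub, hab, sub_self])
    rw [map_sub] at this
    exact sub_eq_zero.mp this
  -- factor Ψ through Z
  obtain ⟨cφ, hcφ, hselφ⟩ := φ.exists_preimage_norm_le hφ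
  set sel : Z → ellOne := fun z => Classical.choose (hselφ z) with hsel
  have hselφ' : ∀ z, φ (sel z) = z := fun z => (Classical.choose_spec (hselφ z)).1
  have hseln : ∀ z, ‖sel z‖ ≤ cφ * ‖z‖ := fun z => (Classical.choose_spec (hselφ z)).2
  set slin : Z →ₗ[ℝ] Y :=
    { toFun := fun z => Ψ (sel z)
      map_add' := by
        intro z z'
        show Ψ (sel (z + z')) = Ψ (sel z) + Ψ (sel z')
        have h1 : φ (sel (z + z')) = φ (sel z + sel z') := by
          rw [map_add, hselφ', hselφ', hselφ']
        rw [hwd _ _ h1, map_add]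
      map_smul' := by
        intro r z
        show Ψ (sel (r • z)) = r • Ψ (sel z)
        have h1 : φ (sel (r • z)) = φ (r • sel z) := by
          rw [map_smul, hselφ', hselφ']
        rw [hwd _ _ h1, map_smul] } with hslin
  have hsbound : ∀ z, ‖slin z‖ ≤ (‖Ψ‖ * cφ) * ‖z‖ := by
    intro z
    have h1 : ‖Ψ (sel z)‖ ≤ ‖Ψ‖ * ‖sel z‖ := Ψ.le_opNorm _
    have h2 : ‖Ψ‖ * ‖sel z‖ ≤ ‖Ψ‖ * (cφ * ‖z‖) :=
      mul_le_mul_of_nonneg_left (hseln z) (norm_nonneg _)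
    calc ‖slin z‖ = ‖Ψ (sel z)‖ := rfl
    _ ≤ ‖Ψ‖ * (cφ * ‖z‖) := h1.trans h2
    _ = (‖Ψ‖ * cφ) * ‖z‖ := by ring
  set sc : Z →L[ℝ] Y := slin.mkContinuous (‖Ψ‖ * cφ) hsbound with hsc
  have hsφ : ∀ a : ellOne, sc (φ a) = Ψ a := by
    intro a
    have h1 : φ (sel (φ a)) = φ a := hselφ' (φ a)
    exact hwd _ _ h1
  have hρs : ∀ z, ρ (sc z) = z := by
    intro z
    obtain ⟨a, rfl⟩ := hφ z
    rw [hsφ a, hρΨ a]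
  -- build the retraction
  have hRmem : ∀ y : Y, y - sc (ρ y) ∈ Kρ := by
    intro y
    show ρ (y - sc (ρ y)) = 0
    rw [map_sub, hρs, sub_self]
  set Rlin : Y →L[ℝ] Kρ :=
    (ContinuousLinearMap.id ℝ Y - sc.comp ρ).codRestrict Kρ (fun y => by
      simpa using hRmem y) with hRlin
  refine ⟨(jeq.symm : Kρ →L[ℝ] ellTwo).comp Rlin, ?_⟩
  intro v
  have h1 : Rlin (j v) = j' v := by
    apply Subtype.ext
    rw [hRlin]
    simp only [ContinuousLinearMap.coe_codRestrict_apply, ContinuousLinearMap.coe_sub',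
      Pi.sub_apply, ContinuousLinearMap.coe_id', id_eq, ContinuousLinearMap.comp_apply]
    rw [hρj v, map_zero, sub_zero]
    rfl
  simp only [ContinuousLinearMap.comp_apply]
  rw [h1]
  have h2 : jeq.symm (jeq v) = v := jeq.symm_apply_apply v
  rw [← hjeq_apply v] at h1
  calc (jeq.symm : Kρ →L[ℝ] ellTwo) (j' v) = jeq.symm (jeq v) := by rw [← hjeq_apply v]; rfl
  _ = v := h2
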